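/- The rule f^min on the universal domain 𝒰_𝒪 defined by f^min(P_N) = t(P_{min N}), i.e., the top set of the voter with the minimum index in the society, satisfies ontoness, tops-onliness, participation, and object neutrality, but violates false-name-proofness. -/
import Mathlib


/-! ## Basic framework: preferences, profiles, voting rules, axioms -/

/-- A preference is a strict linear order on the set `A` of alternatives, encoded as a
`LinearOrder` structure on `A`; alternative `x` is strictly preferred to `y` iff `y < x`
(i.e. "greater is better"). -/
abbrev Pref (A : Type*) := LinearOrder A

/-- Strict preference: `x` is strictly preferred to `y` under `p`. -/
def Pref.pref {A : Type*} (p : Pref A) (x y : A) : Prop := p.lt y x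

/-- Weak preference (the weak counterpart `R` of the strict preference `P`):
`x` is weakly preferred to `y` under `p`. -/
def Pref.wpref {A : Type*} (p : Pref A) (x y : A) : Prop := p.le y x

/-- The top (most preferred) alternative of a preference. -/
noncomputable def Pref.top {A : Type*} [Fintype A] [Nonempty A] (p : Pref A) : A :=
  @Finset.max' A p Finset.univ Finset.univ_nonempty

/-- The bottom (least preferred) alternative of a preference. -/
noncomputable def Pref.bot {A : Type*} [Fintype A] [Nonempty A] (p : Pref A) : A :=
  @Finset.min' A p Finset.univ Finset.univ_nonempty

/-- A profile over the society `N` (a finite set of voters, indexed by naturals):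
it assigns a preference to each member of `N`. -/
abbrev Profile (A : Type*) (N : Finset ℕ) := (i : ℕ) → i ∈ N → Pref A

/-- The profile `P` takes values in the domain `D` of preferences. -/
def Profile.inDomain {A : Type*} {N : Finset ℕ} (P : Profile A N) (D : Set (Pref A)) : Prop :=
  ∀ i (hi : i ∈ N), P i hi ∈ D

/-- A (variable-population) voting rule: it assigns an alternative to every society
together with a profile over it. -/
abbrev Rule (A : Type*) := (N : Finset ℕ) → Profile A N → A

/-- Ontoness on the domain `D`: for every society and every alternative, some
`D`-profile realizes that alternative. -/
def OntoOn {A : Type*} (D : Set (Pref A)) (f : Rule A) : Prop :=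
  ∀ N : Finset ℕ, N.Nonempty → ∀ a : A, ∃ P : Profile A N, P.inDomain D ∧ f N P = a

/-- Tops-onliness on the domain `D`: two `D`-profiles with the same tops get the
same outcome. -/
def TopsOnlyOn {A : Type*} [Fintype A] [Nonempty A] (D : Set (Pref A)) (f : Rule A) : Prop :=
  ∀ N : Finset ℕ, N.Nonempty → ∀ P P' : Profile A N, P.inDomain D → P'.inDomain D →
    (∀ i (hi : i ∈ N), (P i hi).top = (P' i hi).top) → f N P = f N P'

/-- False-name-proofness on the domain `D`: if a voter `i` of the society `N` casts,
under fresh identities `N'`, extra votes identical to her own preference, the outcome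
does not improve for her. -/
def FalseNameProofOn {A : Type*} (D : Set (Pref A)) (f : Rule A) : Prop :=
  ∀ N N' : Finset ℕ, N.Nonempty → N'.Nonempty → Disjoint N N' →
    ∀ P : Profile A (N ∪ N'), P.inDomain D →
      ∀ i (hi : i ∈ N),
        (∀ j (hj : j ∈ N'),
            P j (Finset.mem_union_right N hj) = P i (Finset.mem_union_left N' hi)) →
        (P i (Finset.mem_union_left N' hi)).wpref
          (f N (fun j hj => P j (Finset.mem_union_left N' hj)))
          (f (N ∪ N') P)

/-- Participation on the domain `D`: no voter gains by abstaining. -/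
def ParticipationOn {A : Type*} (D : Set (Pref A)) (f : Rule A) : Prop :=
  ∀ N : Finset ℕ, 2 ≤ N.card → ∀ P : Profile A N, P.inDomain D →
    ∀ i (hi : i ∈ N),
      (P i hi).wpref (f N P) (f (N.erase i) (fun j hj => P j (Finset.mem_of_mem_erase hj)))

lemma mem_of_mem_image_perm {σ : Equiv.Perm ℕ} {N : Finset ℕ} {j : ℕ}
    (hj : j ∈ N.image σ) : σ.symm j ∈ N := by
  obtain ⟨i, hi, rfl⟩ := Finset.mem_image.mp hj
  simpa using hi

/-- The permuted profile `σ(P_N)` over the society `σ(N)`: voter `σ i` gets the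
preference `P i`. -/
def permProfile {A : Type*} (σ : Equiv.Perm ℕ) {N : Finset ℕ} (P : Profile A N) :
    Profile A (N.image σ) :=
  fun j hj => P (σ.symm j) (mem_of_mem_image_perm hj)

/-- Anonymity on the domain `D`: permuting the voters' identities does not change
the outcome. -/
def AnonymousOn {A : Type*} (D : Set (Pref A)) (f : Rule A) : Prop :=
  ∀ (σ : Equiv.Perm ℕ) (N : Finset ℕ), N.Nonempty → ∀ P : Profile A N, P.inDomain D →
    f (N.image σ) (permProfile σ P) = f N P

/-- Relabeling a preference along a permutation `γ` of the alternatives: in the new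
preference, `γ x` is strictly preferred to `γ y` iff `x` was strictly preferred to `y`. -/
noncomputable def Pref.relabel {A : Type*} (p : Pref A) (γ : Equiv.Perm A) : Pref A :=
  @LinearOrder.lift' A A p γ.symm γ.symm.injective

/-- Neutrality on the domain `D`: relabeling the alternatives by a permutation `γ`
relabels the outcome accordingly. -/
def NeutralOn {A : Type*} (D : Set (Pref A)) (f : Rule A) : Prop :=
  ∀ (γ : Equiv.Perm A) (N : Finset ℕ), N.Nonempty → ∀ P : Profile A N, P.inDomain D →
    γ (f N P) = f N (fun i hi => (P i hi).relabel γ)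

/-! ## The domain of preferences over subsets of a set `O` of objects -/

/-- Object neutrality: permuting the objects by `μ` (which permutes every subset of
objects pointwise) relabels the outcome accordingly. -/
def ObjectNeutralOn {O : Type*} [Fintype O] [DecidableEq O]
    (D : Set (Pref (Finset O))) (f : Rule (Finset O)) : Prop :=
  ∀ (μ : Equiv.Perm O) (N : Finset ℕ), N.Nonempty →
    ∀ P : Profile (Finset O) N, P.inDomain D →
      (f N P).image μ = f N (fun i hi => (P i hi).relabel μ.finsetCongr)

/-- A preference over subsets of objects is separable if adding an object `x ∉ S` to a
set `S` improves the set exactly when `{x}` is preferred to `∅`. -/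
def Separable {O : Type*} [Fintype O] [DecidableEq O] (p : Pref (Finset O)) : Prop :=
  ∀ (S : Finset O) (x : O), x ∉ S → (p.pref (insert x S) S ↔ p.pref {x} (∅ : Finset O))

/-- The domain of separable preferences over subsets of objects. -/
def SepDom (O : Type*) [Fintype O] [DecidableEq O] : Set (Pref (Finset O)) :=
  {p | Separable p}

/-- `t(P_N)`: the set of distinct top sets of the profile `P`. -/
noncomputable def distinctTops {O : Type*} [Fintype O] [DecidableEq O] {N : Finset ℕ}
    (P : Profile (Finset O) N) : Finset (Finset O) :=
  N.attach.image fun i => (P i.1 i.2).top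

/-- The rule `f^>`: an object is chosen iff it belongs to strictly more than half of the
distinct top sets of the profile. -/
noncomputable def fGt (O : Type*) [Fintype O] [DecidableEq O] : Rule (Finset O) :=
  fun N P =>
    Finset.univ.filter fun x =>
      (distinctTops P).card < 2 * ((distinctTops P).filter fun T => x ∈ T).card

/-- The rule `f^≥`: an object is chosen iff it belongs to at least half of the
distinct top sets of the profile. -/
noncomputable def fGe (O : Type*) [Fintype O] [DecidableEq O] : Rule (Finset O) :=
  fun N P =>
    Finset.univ.filter fun x =>
      (distinctTops P).card ≤ 2 * ((distinctTops P).filter fun T => x ∈ T).card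

/-- `g` is the tops-only extension to the domain `Dbig` (⊇ separable preferences) of the
tops-only rule `f` defined on the separable domain: on every `Dbig`-profile `P`, `g`
agrees with the value of `f` at any separable profile `Q` having the same tops as `P`. -/
def IsTopsOnlyExtensionOn {O : Type*} [Fintype O] [DecidableEq O]
    (Dbig : Set (Pref (Finset O))) (f g : Rule (Finset O)) : Prop :=
  ∀ N : Finset ℕ, N.Nonempty →
    ∀ P : Profile (Finset O) N, P.inDomain Dbig →
      ∀ Q : Profile (Finset O) N, Q.inDomain (SepDom O) →
        (∀ i (hi : i ∈ N), (P i hi).top = (Q i hi).top) → g N P = f N Q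

/-- The rule `f^min`: it selects the top set of the voter with the minimum index in the
society. -/
noncomputable def fMin (O : Type*) [Fintype O] [DecidableEq O] : Rule (Finset O) :=
  fun N P =>
    if h : N.Nonempty then (P (N.min' h) (N.min'_mem h)).top else (∅ : Finset O)

section Helpers

variable {A : Type*} [Fintype A] [Nonempty A]

lemma Pref.le_top (p : Pref A) (b : A) : p.le b p.top :=
  @Finset.le_max' A p _ b (Finset.mem_univ b)

lemma Pref.top_eq (p : Pref A) (a : A) (h : ∀ b, p.le b a) : p.top = a :=
  p.le_antisymm _ _ (@Finset.max'_le A p _ _ a (fun b _ => h b)) (p.le_top a)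

/-- A preference whose top is `a`. -/
noncomputable def prefTop [DecidableEq A] (a : A) : Pref A :=
  LinearOrder.lift'
    (fun x => if x = a then Fintype.card A else ((Fintype.equivFin A) x : ℕ))
    (by
      intro x y h
      dsimp at h
      split_ifs at h with h1 h2 h2
      · exact h1.trans h2.symm
      · exact absurd h.symm (Nat.ne_of_lt ((Fintype.equivFin A) y).is_lt)
      · exact absurd h (Nat.ne_of_lt ((Fintype.equivFin A) x).is_lt)
      · exact (Fintype.equivFin A).injective (Fin.val_injective h))

lemma prefTop_le_iff [DecidableEq A] (a x y : A) :
    (prefTop a).le x y ↔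
      (if x = a then Fintype.card A else ((Fintype.equivFin A) x : ℕ)) ≤
      (if y = a then Fintype.card A else ((Fintype.equivFin A) y : ℕ)) := Iff.rfl

lemma prefTop_top [DecidableEq A] (a : A) : (prefTop a).top = a := by
  apply Pref.top_eq
  intro b
  rw [prefTop_le_iff]
  simp only [if_pos rfl]
  split_ifs with h
  · exact le_rfl
  · exact le_of_lt ((Fintype.equivFin A) b).is_lt

lemma Pref.relabel_le_iff (p : Pref A) (γ : Equiv.Perm A) (x y : A) :
    (p.relabel γ).le x y ↔ p.le (γ.symm x) (γ.symm y) := Iff.rfl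

lemma Pref.top_relabel (p : Pref A) (γ : Equiv.Perm A) :
    (p.relabel γ).top = γ p.top := by
  apply Pref.top_eq
  intro b
  rw [Pref.relabel_le_iff, Equiv.symm_apply_apply]
  exact p.le_top _

end Helpers

/-- For at least two objects, the rule `f^min` satisfies ontoness,
tops-onliness, participation and object neutrality, but violates false-name-proofness. -/
theorem stmt_16 {O : Type*} [Fintype O] [DecidableEq O] (hO : 2 ≤ Fintype.card O) :
    OntoOn Set.univ (fMin O) ∧ TopsOnlyOn Set.univ (fMin O) ∧
    ParticipationOn Set.univ (fMin O) ∧ ObjectNeutralOn Set.univ (fMin O) ∧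
    ¬ FalseNameProofOn Set.univ (fMin O) := by
  refine ⟨?_, ?_, ?_, ?_, ?_⟩
  · -- Ontoness
    intro N hN a
    refine ⟨fun _ _ => prefTop a, fun _ _ => Set.mem_univ _, ?_⟩
    simp [fMin, dif_pos hN, prefTop_top]
  · -- Tops-onliness
    intro N hN P P' _ _ htops
    simp only [fMin, dif_pos hN]
    exact htops _ _
  · -- Participation
    intro N hcard P _ i hi
    have hN : N.Nonempty := Finset.card_pos.mp (by omega)
    have hNe : (N.erase i).Nonempty := by
      rw [← Finset.card_pos, Finset.card_erase_of_mem hi]; omega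
    simp only [fMin, dif_pos hN, dif_pos hNe]
    by_cases h : N.min' hN = i
    · subst h
      exact (P _ _).le_top _
    · have hmem : N.min' hN ∈ N.erase i := Finset.mem_erase.mpr ⟨h, N.min'_mem hN⟩
      have hmin : (N.erase i).min' hNe = N.min' hN := by
        apply le_antisymm (Finset.min'_le _ _ hmem)
        exact Finset.le_min' _ _ _ fun b hb => N.min'_le _ (Finset.mem_of_mem_erase hb)
      have key : ∀ m (hm : m ∈ N), m = N.min' hN →
          (P m hm).top = (P (N.min' hN) (N.min'_mem hN)).top := by
        rintro m hm rfl; rfl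
      rw [key _ _ hmin]
      exact (P i hi).le_refl _
  · -- Object neutrality
    intro μ N hN P _
    simp only [fMin, dif_pos hN, Pref.top_relabel]
    simp [Equiv.finsetCongr_apply, Finset.map_eq_image]
  · -- ¬ False-name-proofness
    intro hfnp
    obtain ⟨x⟩ := Fintype.card_pos_iff.mp (by omega : 0 < Fintype.card O)
    set N : Finset ℕ := {1, 2} with hNdef
    set N' : Finset ℕ := {0} with hN'def
    have hdisj : Disjoint N N' := by decide
    set P : Profile (Finset O) (N ∪ N') := fun j _ =>
      if j = 1 then prefTop (∅ : Finset O) else prefTop ({x} : Finset O) with hPdef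
    have h2N : (2 : ℕ) ∈ N := by decide
    have h0N' : (0 : ℕ) ∈ N' := by decide
    have key := hfnp N N' (by decide) (by decide) hdisj P (fun _ _ => Set.mem_univ _) 2 h2N
      (by
        intro j hj
        have : j = 0 := by simpa [hN'def] using hj
        subst this
        simp [hPdef])
    -- compute the two outcomes
    have hNne : N.Nonempty := ⟨1, by decide⟩
    have hUne : (N ∪ N').Nonempty := ⟨1, by simp [hNdef]⟩
    have hminN : N.min' hNne = 1 := by
      apply le_antisymm (Finset.min'_le _ _ (by decide))
      exact Finset.le_min' _ _ _ (by decide)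
    have hminU : (N ∪ N').min' hUne = 0 := by
      apply Nat.le_zero.mp
      exact Finset.min'_le _ _ (Finset.mem_union_right _ h0N')
    have hfN : fMin O N (fun j hj => P j (Finset.mem_union_left N' hj)) = (∅ : Finset O) := by
      simp only [fMin, dif_pos hNne]
      have aux : ∀ m (hm : m ∈ N ∪ N'), m = 1 → (P m hm).top = (∅ : Finset O) := by
        rintro m hm rfl
        simp [hPdef, prefTop_top]
      exact aux _ (Finset.mem_union_left _ (N.min'_mem hNne)) hminN
    have hfU : fMin O (N ∪ N') P = ({x} : Finset O) := by
      simp only [fMin, dif_pos hUne]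
      have aux : ∀ m (hm : m ∈ N ∪ N'), m = 0 → (P m hm).top = ({x} : Finset O) := by
        rintro m hm rfl
        simp [hPdef, prefTop_top]
      exact aux _ ((N ∪ N').min'_mem hUne) hminU
    rw [hfN, hfU] at key
    have hP2 : P 2 (Finset.mem_union_left N' h2N) = prefTop ({x} : Finset O) := by
      simp [hPdef]
    rw [hP2] at key
    have key' : (prefTop ({x} : Finset O)).le ({x} : Finset O) (∅ : Finset O) := key
    rw [prefTop_le_iff] at key'
    rw [if_pos rfl, if_neg (Finset.singleton_ne_empty x).symm] at key'
    exact absurd key' (not_le.mpr ((Fintype.equivFin (Finset O)) (∅ : Finset O)).is_lt)
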